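/- Let a, a', b be nonnegative integers with b <= a and b <= a', and define the falling factorial P(a,b) = a!/(a-b)!. If |a - a'| <= a' - b + 1 and a' - b + 1 > 0, then |P(a,b)/P(a',b) - 1| <= (2^b - 1) * |a - a'| / (a' - b + 1). -/
import Mathlib

lemma aux_desc (a a' : ℕ) (x : ℝ) (hx0 : 0 ≤ x) :
    ∀ k, k ≤ a → k ≤ a' → (∀ j, j < k → |(a:ℝ) - a'| ≤ x * ((a':ℝ) - j)) →
    |((a.descFactorial k : ℕ):ℝ) - ((a'.descFactorial k : ℕ):ℝ)| ≤
      ((1+x)^k - 1) * ((a'.descFactorial k : ℕ):ℝ) := by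
  intro k
  induction k with
  | zero => simp
  | succ k ih =>
    intro hka hka' hcond
    have hka1 : k ≤ a := Nat.le_of_succ_le hka
    have hka1' : k ≤ a' := Nat.le_of_succ_le hka'
    have ihh := ih hka1 hka1' (fun j hj => hcond j (Nat.lt_succ_of_lt hj))
    have hc1 : ((a.descFactorial (k+1) : ℕ):ℝ) = ((a:ℝ) - k) * ((a.descFactorial k : ℕ):ℝ) := by
      rw [Nat.descFactorial_succ, Nat.cast_mul, Nat.cast_sub hka1]
    have hc2 : ((a'.descFactorial (k+1) : ℕ):ℝ) = ((a':ℝ) - k) * ((a'.descFactorial k : ℕ):ℝ) := by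
      rw [Nat.descFactorial_succ, Nat.cast_mul, Nat.cast_sub hka1']
    set P : ℝ := ((a.descFactorial k : ℕ):ℝ)
    set Q : ℝ := ((a'.descFactorial k : ℕ):ℝ)
    have hQ0 : 0 ≤ Q := Nat.cast_nonneg _
    have hak : (k:ℝ) ≤ a := by exact_mod_cast hka1
    have hak' : (k:ℝ) ≤ a' := by exact_mod_cast hka1'
    have hcondk := hcond k (Nat.lt_succ_self k)
    have habs : (a:ℝ) - a' ≤ |(a:ℝ) - a'| := le_abs_self _
    have habs2 : -((a:ℝ) - a') ≤ |(a:ℝ) - a'| := neg_le_abs _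
    have hpow : (0:ℝ) ≤ (1+x)^k - 1 := by
      have : (1:ℝ) ≤ (1+x)^k := one_le_pow₀ (by linarith)
      linarith
    rw [hc1, hc2]
    have key : |((a:ℝ) - k) * P - ((a':ℝ) - k) * Q| ≤
        (((a:ℝ) - k)) * |P - Q| + |(a:ℝ) - a'| * Q := by
      have : ((a:ℝ) - k) * P - ((a':ℝ) - k) * Q
          = ((a:ℝ) - k) * (P - Q) + ((a:ℝ) - a') * Q := by ring
      rw [this]
      calc |((a:ℝ) - k) * (P - Q) + ((a:ℝ) - a') * Q|
          ≤ |((a:ℝ) - k) * (P - Q)| + |((a:ℝ) - a') * Q| := abs_add_le _ _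
        _ = ((a:ℝ) - k) * |P - Q| + |(a:ℝ) - a'| * Q := by
            rw [abs_mul, abs_mul, abs_of_nonneg (by linarith : (0:ℝ) ≤ (a:ℝ) - k),
              abs_of_nonneg hQ0]
    have hPQ : 0 ≤ |P - Q| := abs_nonneg _
    have haa' : ((a:ℝ) - k) ≤ ((a':ℝ) - k) * (1 + x) := by nlinarith
    calc |((a:ℝ) - k) * P - ((a':ℝ) - k) * Q|
        ≤ ((a:ℝ) - k) * |P - Q| + |(a:ℝ) - a'| * Q := key
      _ ≤ ((a':ℝ) - k) * (1 + x) * (((1+x)^k - 1) * Q) + x * ((a':ℝ) - k) * Q := by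
          have h1 : ((a:ℝ) - k) * |P - Q| ≤ ((a':ℝ) - k) * (1 + x) * (((1+x)^k - 1) * Q) := by
            nlinarith
          have h2 : |(a:ℝ) - a'| * Q ≤ x * ((a':ℝ) - k) * Q := by nlinarith
          linarith
      _ = ((1+x)^(k+1) - 1) * (((a':ℝ) - k) * Q) := by ring

lemma aux_pow (x : ℝ) (hx0 : 0 ≤ x) (hx1 : x ≤ 1) :
    ∀ b : ℕ, (1+x)^b - 1 ≤ (2^b - 1) * x := by
  intro b
  induction b with
  | zero => simp
  | succ b ih =>
    have h2 : (0:ℝ) < 2^b := by positivity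
    have : (1+x)^(b+1) = (1+x)^b * (1+x) := by ring
    rw [this, pow_succ]
    have hp1 : (1:ℝ) ≤ (1+x)^b := one_le_pow₀ (by linarith)
    nlinarith [mul_le_mul_of_nonneg_right ih (by linarith : (0:ℝ) ≤ 1+x),
      mul_nonneg (by nlinarith [one_le_pow₀ (by norm_num : (1:ℝ) ≤ 2) (n:=b)] : (0:ℝ) ≤ (2:ℝ)^b - 1) hx0]

theorem stmt_6 (a a' b : ℕ) (hba : b ≤ a) (hba' : b ≤ a')
    (hclose : |(a : ℝ) - a'| ≤ (a' : ℝ) - b + 1) :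
    |((a.descFactorial b : ℕ) : ℝ) / ((a'.descFactorial b : ℕ) : ℝ) - 1| ≤
      (2 ^ b - 1) * |(a : ℝ) - a'| / ((a' : ℝ) - b + 1) := by
  have hb' : (b:ℝ) ≤ a' := by exact_mod_cast hba'
  have hD : (0:ℝ) < (a':ℝ) - b + 1 := by linarith
  set D : ℝ := (a':ℝ) - b + 1 with hDdef
  set r : ℝ := |(a:ℝ) - a'| with hrdef
  have hr0 : 0 ≤ r := abs_nonneg _
  set x : ℝ := r / D with hxdef
  have hx0 : 0 ≤ x := div_nonneg hr0 hD.le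
  have hx1 : x ≤ 1 := (div_le_one hD).mpr hclose
  have hcond : ∀ j, j < b → r ≤ x * ((a':ℝ) - j) := by
    intro j hj
    have hj' : (j:ℝ) ≤ (b:ℝ) - 1 := by
      have : (j:ℝ) + 1 ≤ b := by exact_mod_cast hj
      linarith
    have hDj : D ≤ (a':ℝ) - j := by rw [hDdef]; linarith
    have : x * D ≤ x * ((a':ℝ) - j) := mul_le_mul_of_nonneg_left hDj hx0
    have hxD : x * D = r := by rw [hxdef]; exact div_mul_cancel₀ r hD.ne'
    linarith
  have key := aux_desc a a' x hx0 b hba hba' hcond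
  have hQpos : (0:ℝ) < ((a'.descFactorial b : ℕ):ℝ) := by
    have : a'.descFactorial b ≠ 0 := by
      intro h
      exact absurd (Nat.descFactorial_eq_zero_iff_lt.mp h) (Nat.not_lt.mpr hba')
    exact_mod_cast Nat.pos_of_ne_zero this
  have hdiv : |((a.descFactorial b : ℕ):ℝ) / ((a'.descFactorial b : ℕ):ℝ) - 1| ≤ (1+x)^b - 1 := by
    rw [show ((a.descFactorial b : ℕ):ℝ) / ((a'.descFactorial b : ℕ):ℝ) - 1
        = (((a.descFactorial b : ℕ):ℝ) - ((a'.descFactorial b : ℕ):ℝ)) / ((a'.descFactorial b : ℕ):ℝ) by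
      field_simp]
    rw [abs_div, abs_of_pos hQpos, div_le_iff₀ hQpos]
    exact key
  have hpow := aux_pow x hx0 hx1 b
  calc |((a.descFactorial b : ℕ):ℝ) / ((a'.descFactorial b : ℕ):ℝ) - 1|
      ≤ (1+x)^b - 1 := hdiv
    _ ≤ (2^b - 1) * x := hpow
    _ = (2^b - 1) * r / D := by rw [hxdef]; ring
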